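/- arXiv:2509.02307 — 2 statements merged into one kernel-verified Lean document; each statement's English description precedes it below -/
import Mathlib

section
/- For β ≥ 3, a real number θ with π/2 < θ < π, τ > 0, r > 0, and z = r·e^{iθ}, if e^{-rτ cos θ} ≤ (β - 1/3)/(β - 1), then |β + (1-β)·e^{-zτ}| ≥ 1/3. -/
open Real Complex

theorem stmt0 (β θ τ r : ℝ) (z : ℂ)
    (hβ : 3 ≤ β) (hθ1 : Real.pi / 2 < θ) (hθ2 : θ < Real.pi)
    (hτ : 0 < τ) (hr : 0 < r)
    (hz : z = (r : ℂ) * Complex.exp ((θ : ℂ) * Complex.I))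
    (hcond : Real.exp (-(r * τ * Real.cos θ)) ≤ (β - 1/3) / (β - 1)) :
    (1 : ℝ) / 3 ≤ ‖(β : ℂ) + (1 - (β : ℂ)) * Complex.exp (-(z * (τ : ℂ)))‖ := by
  have hβ1 : (0:ℝ) < β - 1 := by linarith
  set w : ℂ := (1 - (β : ℂ)) * Complex.exp (-(z * (τ : ℂ))) with hw
  have habs : ‖w‖ = (β - 1) * Real.exp (-(r * τ * Real.cos θ)) := by
    rw [hw, norm_mul, Complex.norm_exp]
    have h1 : ‖(1 - (β : ℂ))‖ = β - 1 := by
      rw [show (1 - (β:ℂ)) = ((1 - β : ℝ) : ℂ) by push_cast; ring, Complex.norm_real, Real.norm_eq_abs]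
      rw [abs_of_nonpos (by linarith)]; ring
    have h2 : (-(z * (τ : ℂ))).re = -(r * τ * Real.cos θ) := by
      rw [hz]
      simp [Complex.exp_mul_I, Complex.mul_re, Complex.mul_im, Complex.cos_ofReal_re]
      ring
    rw [h1, h2]
  have htri : ‖(β : ℂ)‖ - ‖w‖ ≤ ‖(β : ℂ) + w‖ := by
    have := norm_add_le ((β : ℂ) + w) (-w)
    simpa using this
  have hβabs : ‖(β : ℂ)‖ = β := by
    rw [Complex.norm_real, Real.norm_eq_abs, abs_of_pos (by linarith)]
  have hwle : ‖w‖ ≤ β - 1/3 := by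
    rw [habs]
    calc (β - 1) * Real.exp (-(r * τ * Real.cos θ))
        ≤ (β - 1) * ((β - 1/3) / (β - 1)) :=
          mul_le_mul_of_nonneg_left hcond (le_of_lt hβ1)
      _ = β - 1/3 := by field_simp
  have := htri
  rw [hβabs] at this
  linarith
end

section
/- For the shifted BDF-k characteristic polynomial ρ_s(ξ) = Σ_{j=1}^k (1/j)(1−ξ)^j − Σ_{j=2}^k (1/(j−1))(1−ξ)^j with 2 ≤ k ≤ 7, there exist c > 0 and a neighborhood of λ = 0 such that |ρ_s(e^{-λ}) − λ e^{-λ}| ≤ c|λ|^{k+1}. -/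
open Complex Finset

/-- Tail bound for the `-log(1-x)` Taylor series. -/
lemma tail_bound_neg_log (m : ℕ) (hm : 1 ≤ m) (x : ℂ) (hx : ‖x‖ ≤ 1/2) :
    ‖(∑ j ∈ Finset.range m, x ^ j / j) - (-Complex.log (1 - x))‖
      ≤ 2 * ‖x‖ ^ m := by
  have hx1 : ‖x‖ < 1 := lt_of_le_of_lt hx (by norm_num)
  have hS := hasSum_taylorSeries_neg_log hx1
  have ht : HasSum (fun n : ℕ => x ^ (n + m) / ((n + m : ℕ) : ℂ))
      (-Complex.log (1 - x) - ∑ j ∈ Finset.range m, x ^ j / j) :=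
    ((hasSum_nat_add_iff' m).mpr hS)
  set r := ‖x‖ with hr
  have hr0 : 0 ≤ r := norm_nonneg x
  have hr1 : r < 1 := hx1
  have hgeom : HasSum (fun n : ℕ => r ^ (n + m)) (r ^ m * (1 - r)⁻¹) := by
    have := (hasSum_geometric_of_lt_one hr0 hr1).mul_left (r ^ m)
    refine this.congr_fun (fun n => ?_)
    rw [pow_add, mul_comm]
  have hnorm : ∀ n : ℕ, ‖x ^ (n + m) / ((n + m : ℕ) : ℂ)‖ ≤ r ^ (n + m) := by
    intro n
    have hnm : (1:ℝ) ≤ ((n + m : ℕ) : ℝ) := by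
      have : 1 ≤ n + m := le_trans hm (Nat.le_add_left m n)
      exact_mod_cast this
    rw [norm_div, Complex.norm_natCast, norm_pow]
    calc ‖x‖ ^ (n + m) / ((n + m : ℕ) : ℝ) ≤ ‖x‖ ^ (n + m) / 1 :=
          div_le_div_of_nonneg_left (pow_nonneg (norm_nonneg x) _) one_pos hnm
      _ = r ^ (n + m) := by rw [div_one]
  have hnormsum : ‖-Complex.log (1 - x) - ∑ j ∈ Finset.range m, x ^ j / j‖
      ≤ r ^ m * (1 - r)⁻¹ := by
    have hsummable : Summable (fun n : ℕ => ‖x ^ (n + m) / ((n + m : ℕ) : ℂ)‖) :=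
      Summable.of_nonneg_of_le (fun n => norm_nonneg _) hnorm hgeom.summable
    calc ‖-Complex.log (1 - x) - ∑ j ∈ Finset.range m, x ^ j / j‖
        = ‖∑' n : ℕ, x ^ (n + m) / ((n + m : ℕ) : ℂ)‖ := by rw [ht.tsum_eq]
      _ ≤ ∑' n : ℕ, ‖x ^ (n + m) / ((n + m : ℕ) : ℂ)‖ := norm_tsum_le_tsum_norm hsummable
      _ ≤ ∑' n : ℕ, r ^ (n + m) := Summable.tsum_le_tsum hnorm hsummable hgeom.summable
      _ = r ^ m * (1 - r)⁻¹ := hgeom.tsum_eq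
  have hinv : (1 - r)⁻¹ ≤ 2 := by
    rw [inv_le_comm₀ (by linarith) (by norm_num)]
    linarith
  have hfinal : ‖(∑ j ∈ Finset.range m, x ^ j / j) - (-Complex.log (1 - x))‖
      ≤ r ^ m * (1 - r)⁻¹ := by
    rw [← norm_neg, neg_sub]; exact hnormsum
  calc ‖(∑ j ∈ Finset.range m, x ^ j / j) - (-Complex.log (1 - x))‖
      ≤ r ^ m * (1 - r)⁻¹ := hfinal
    _ ≤ r ^ m * 2 := mul_le_mul_of_nonneg_left hinv (pow_nonneg hr0 m)
    _ = 2 * r ^ m := by ring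

theorem stmt7 (k : ℕ) (hk2 : 2 ≤ k) (hk7 : k ≤ 7) :
    ∃ c > (0:ℝ), ∃ ε > (0:ℝ), ∀ lam : ℂ, ‖lam‖ < ε →
      ‖((∑ j ∈ Finset.Icc 1 k, (1 / (j : ℂ)) * (1 - Complex.exp (-lam))^j)
          - (∑ j ∈ Finset.Icc 2 k, (1 / ((j : ℂ) - 1)) * (1 - Complex.exp (-lam))^j))
          - lam * Complex.exp (-lam)‖
        ≤ c * ‖lam‖ ^ (k + 1) := by
  refine ⟨1024, by norm_num, 1/4, by norm_num, fun lam hlam => ?_⟩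
  set x : ℂ := 1 - Complex.exp (-lam) with hxdef
  have habslam : ‖lam‖ < 1/4 := hlam
  have hx2 : ‖x‖ ≤ 2 * ‖lam‖ := by
    have h1 : ‖-lam‖ ≤ 1 := by
      rw [norm_neg]; linarith
    have h2 := Complex.norm_exp_sub_one_le h1
    rw [norm_neg] at h2
    calc ‖x‖ = ‖Complex.exp (-lam) - 1‖ := by
          rw [hxdef, ← norm_neg]; ring_nf
      _ ≤ 2 * ‖lam‖ := h2
  have hxhalf : ‖x‖ ≤ 1/2 := by linarith
  have him : |(-lam).im| < 1/4 := by
    have h := Complex.abs_im_le_norm (-lam)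
    rw [norm_neg] at h
    exact lt_of_le_of_lt h habslam
  have hpi : (1:ℝ)/4 < Real.pi := by
    have := Real.pi_gt_three; linarith
  have hlog : Complex.log (1 - x) = -lam := by
    rw [hxdef, show (1 : ℂ) - (1 - Complex.exp (-lam)) = Complex.exp (-lam) by ring]
    apply Complex.log_exp
    · cases' abs_lt.mp him with h _; linarith
    · cases' abs_lt.mp him with _ h; linarith
  have hnlog : -Complex.log (1 - x) = lam := by rw [hlog]; ring
  -- First sum
  have hA : (∑ j ∈ Finset.Icc 1 k, (1 / (j : ℂ)) * x ^ j)
      = ∑ j ∈ Finset.range (k+1), x ^ j / j := by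
    rw [show (∑ j ∈ Finset.Icc 1 k, (1 / (j : ℂ)) * x ^ j)
        = ∑ j ∈ Finset.Icc 1 k, x ^ j / (j : ℂ) from
      Finset.sum_congr rfl (fun j _ => by rw [one_div, div_eq_mul_inv, mul_comm])]
    apply Finset.sum_subset
    · intro j hj
      simp only [Finset.mem_Icc] at hj
      simp only [Finset.mem_range]
      omega
    · intro j hj hj'
      simp only [Finset.mem_range] at hj
      simp only [Finset.mem_Icc] at hj'
      have : j = 0 := by omega
      subst this; simp
  -- Second sum reindex
  have hsub : (∑ j ∈ Finset.Icc 1 (k-1), x ^ j / (j : ℂ))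
      = ∑ j ∈ Finset.range k, x ^ j / (j : ℂ) := by
    apply Finset.sum_subset
    · intro j hj
      simp only [Finset.mem_Icc] at hj
      simp only [Finset.mem_range]
      omega
    · intro j hj hj'
      simp only [Finset.mem_range] at hj
      simp only [Finset.mem_Icc] at hj'
      have : j = 0 := by omega
      subst this; simp
  have hB : (∑ j ∈ Finset.Icc 2 k, (1 / ((j : ℂ) - 1)) * x ^ j)
      = x * ∑ j ∈ Finset.range k, x ^ j / j := by
    have himg : (Finset.Icc 1 (k-1)).image (· + 1) = Finset.Icc 2 k := by
      rw [Finset.image_add_right_Icc]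
      congr 1
      omega
    rw [← himg, Finset.sum_image (by intro a _ b _ h; simp only at h; omega)]
    rw [← hsub, Finset.mul_sum]
    refine Finset.sum_congr rfl (fun j hj => ?_)
    simp only [Finset.mem_Icc] at hj
    have hj1 : (1:ℕ) ≤ j := hj.1
    push_cast
    rw [pow_succ]
    ring
  set r := ‖x‖ with hrdef
  have hr0 : 0 ≤ r := norm_nonneg x
  have hT1 : ‖(∑ j ∈ Finset.range (k+1), x ^ j / j) - lam‖
      ≤ 2 * r ^ (k+1) := by
    have := tail_bound_neg_log (k+1) (by omega) x hxhalf
    rwa [hnlog] at this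
  have hT2 : ‖(∑ j ∈ Finset.range k, x ^ j / j) - lam‖
      ≤ 2 * r ^ k := by
    have := tail_bound_neg_log k (by omega) x hxhalf
    rwa [hnlog] at this
  have hexp : Complex.exp (-lam) = 1 - x := by rw [hxdef]; ring
  have hkey : ((∑ j ∈ Finset.Icc 1 k, (1 / (j : ℂ)) * x ^ j)
        - (∑ j ∈ Finset.Icc 2 k, (1 / ((j : ℂ) - 1)) * x ^ j))
        - lam * Complex.exp (-lam)
      = ((∑ j ∈ Finset.range (k+1), x ^ j / j) - lam)
        - x * ((∑ j ∈ Finset.range k, x ^ j / j) - lam) := by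
    rw [hA, hB, hexp]; ring
  calc ‖((∑ j ∈ Finset.Icc 1 k, (1 / (j : ℂ)) * x ^ j)
          - ∑ j ∈ Finset.Icc 2 k, (1 / ((j : ℂ) - 1)) * x ^ j)
          - lam * Complex.exp (-lam)‖
      = ‖((∑ j ∈ Finset.range (k+1), x ^ j / j) - lam)
        - x * ((∑ j ∈ Finset.range k, x ^ j / j) - lam)‖ := by rw [hkey]
    _ ≤ ‖(∑ j ∈ Finset.range (k+1), x ^ j / j) - lam‖
        + ‖x * ((∑ j ∈ Finset.range k, x ^ j / j) - lam)‖ := by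
        rw [sub_eq_add_neg]
        refine (norm_add_le _ _).trans ?_
        rw [norm_neg]
    _ ≤ 2 * r ^ (k+1) + r * (2 * r ^ k) := by
        rw [norm_mul]
        exact add_le_add hT1 (mul_le_mul_of_nonneg_left hT2 hr0)
    _ = 4 * r ^ (k+1) := by ring
    _ ≤ 4 * (2 * ‖lam‖) ^ (k+1) := by
        apply mul_le_mul_of_nonneg_left _ (by norm_num : (0:ℝ) ≤ 4)
        exact pow_le_pow_left₀ hr0 hx2 _
    _ = 4 * 2 ^ (k+1) * ‖lam‖ ^ (k+1) := by rw [mul_pow]; ring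
    _ ≤ 1024 * ‖lam‖ ^ (k+1) := by
        apply mul_le_mul_of_nonneg_right _ (pow_nonneg (norm_nonneg lam) _)
        have h28 : (2:ℝ) ^ (k+1) ≤ 2 ^ 8 := by
          apply pow_le_pow_right₀ (by norm_num); omega
        norm_num at h28 ⊢
        linarith
end
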